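/- Let h ∈ C¹(ℝ^d) be bounded with bounded gradient, let B ⊂ ℝ^d be a fixed closed ball, and let Γ ⊂ ℝ^d be any measurable set. For ε ∈ (0,1) define U'_ε = ∫_B h(x) 1_{√ε·Γ}(x) dx. Then for every k ∈ ℕ and every ε ∈ [(k+1)^{-3}, k^{-3}], |U'_ε - U'_{ε_k}| ≤ (1 - (εk³)^{d/2})·‖h‖·λ_d(B) + (C'/k)‖∇h‖ + (C''/k)‖h‖, where ε_k = k^{-3} and C', C'' depend only on B and d. Consequently sup_{(k+1)^{-3} ≤ ε ≤ k^{-3}} |U'_ε - U'_{ε_k}| → 0 as k → ∞. -/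

import Mathlib

open Filter Topology MeasureTheory Pointwise

section Helpers
open Metric

lemma pow_sub_pow_le' {a b : ℝ} (hb : 0 ≤ b) (hba : b ≤ a) (n : ℕ) :
    a^n - b^n ≤ n * a^(n-1) * (a - b) := by
  induction n with
  | zero => simp
  | succ n ih =>
    rcases Nat.eq_zero_or_pos n with rfl | hn
    · simp
    · have ha : 0 ≤ a := hb.trans hba
      have h1 : a^(n+1) - b^(n+1) = a * (a^n - b^n) + (a - b) * b^n := by ring
      have h2 : a * (a^n - b^n) ≤ a * (n * a^(n-1) * (a-b)) :=
        mul_le_mul_of_nonneg_left ih ha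
      have h3 : a * (n * a^(n-1) * (a-b)) = n * a^n * (a-b) := by
        rw [show a * (n * a^(n-1) * (a-b)) = n * (a * a^(n-1)) * (a-b) by ring,
          ← pow_succ']
        congr 3
        omega
      have h4 : (a-b) * b^n ≤ (a-b) * a^n :=
        mul_le_mul_of_nonneg_left (pow_le_pow_left₀ hb hba n) (by linarith)
      push_cast
      have h5 : ((n:ℝ)+1) * a^n * (a-b) = n*a^n*(a-b) + (a-b)*a^n := by ring
      linarith

-- core estimate
set_option maxHeartbeats 2000000 in
lemma core (d : ℕ) (hd : 1 ≤ d) (z : EuclideanSpace ℝ (Fin d)) (ρ : ℝ) (hρ : 0 < ρ)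
    (Γ : Set (EuclideanSpace ℝ (Fin d))) (hΓ : MeasurableSet Γ)
    (h : EuclideanSpace ℝ (Fin d) → ℝ) (Mh Mg : ℝ) (hMh0 : 0 ≤ Mh) (hMg0 : 0 ≤ Mg)
    (hcont : Continuous h) (hMh : ∀ x, |h x| ≤ Mh)
    (hLip : ∀ x y, |h x - h y| ≤ Mg * ‖x - y‖)
    (s c : ℝ) (hs : 0 < s) (hc1 : 1 ≤ c) (hc4 : c ≤ 4) :
    |(∫ x in Metric.closedBall z ρ, h x * Set.indicator (s • Γ) (fun _ => (1:ℝ)) x) -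
     (∫ x in Metric.closedBall z ρ, h x * Set.indicator ((c*s) • Γ) (fun _ => (1:ℝ)) x)| ≤
      (c - 1) * (((‖z‖+ρ) * (volume (Metric.closedBall z ρ)).toReal) * Mg +
        (2*d*(‖z‖+ρ)*(4*(‖z‖+ρ))^(d-1)*(volume (Metric.closedBall (0:EuclideanSpace ℝ (Fin d)) 1)).toReal
          + d*4^(d-1)*(4*(‖z‖+ρ))^d*(volume (Metric.closedBall (0:EuclideanSpace ℝ (Fin d)) 1)).toReal) * Mh) := by
  have hc0 : (0:ℝ) < c := lt_of_lt_of_le one_pos hc1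
  have hzρ : 0 < ‖z‖ + ρ := by positivity
  set B := Metric.closedBall z ρ with hBdef
  have hB : MeasurableSet B := measurableSet_closedBall
  set A := s • Γ with hAdef
  have hA : MeasurableSet A := hΓ.const_smul₀ s
  have hcA : MeasurableSet (c • A) := hA.const_smul₀ c
  have hcsA : (c*s) • Γ = c • A := by rw [hAdef, mul_smul]
  set Q : Set (EuclideanSpace ℝ (Fin d)) := (fun x => c • x) ⁻¹' B with hQdef
  have hQ : MeasurableSet Q := hB.preimage (continuous_const_smul c).measurable
  set t := (c-1)*(‖z‖+ρ) with htdef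
  have ht0 : 0 ≤ t := by
    apply mul_nonneg (by linarith) hzρ.le
  have ht3 : t ≤ 3*(‖z‖+ρ) := by
    apply mul_le_mul_of_nonneg_right (by linarith) hzρ.le
  set R := ρ + t with hRdef
  have hR0 : 0 ≤ R := by positivity
  -- geometric facts
  have fact1 : B ⊆ Metric.closedBall z R := closedBall_subset_closedBall (by linarith)
  have normx : ∀ x : EuclideanSpace ℝ (Fin d), x ∈ Metric.closedBall z R → True := fun _ _ => trivial
  have fact2 : Q ⊆ Metric.closedBall z R := by
    intro x hx
    simp only [hQdef, Set.mem_preimage, hBdef, Metric.mem_closedBall, dist_eq_norm] at hx ⊢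
    have hcx : ‖c • x‖ ≤ ‖z‖ + ρ := by
      calc ‖c • x‖ = ‖c • x - z + z‖ := by congr 1; module
        _ ≤ ‖c • x - z‖ + ‖z‖ := norm_add_le _ _
        _ ≤ ρ + ‖z‖ := by linarith
        _ = ‖z‖ + ρ := by ring
    have hxx : ‖x‖ ≤ ‖z‖ + ρ := by
      have : ‖c • x‖ = c * ‖x‖ := by rw [norm_smul, Real.norm_eq_abs, abs_of_pos hc0]
      nlinarith [norm_nonneg x]
    calc ‖x - z‖ = ‖(x - c • x) + (c • x - z)‖ := by congr 1; module
      _ ≤ ‖x - c • x‖ + ‖c • x - z‖ := norm_add_le _ _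
      _ ≤ (c-1)*‖x‖ + ρ := by
          have : ‖x - c • x‖ = (c-1) * ‖x‖ := by
            rw [show x - c • x = -((c-1) • x) by module, norm_neg, norm_smul,
              Real.norm_eq_abs, abs_of_nonneg (by linarith)]
          linarith
      _ ≤ R := by
          have : (c-1)*‖x‖ ≤ (c-1)*(‖z‖+ρ) := mul_le_mul_of_nonneg_left hxx (by linarith)
          rw [hRdef, htdef]; linarith
  have fact3 : Metric.closedBall z (ρ - t) ⊆ B ∩ Q := by
    intro x hx
    simp only [Metric.mem_closedBall, dist_eq_norm] at hx
    have hxz : ‖x - z‖ ≤ ρ - t := hx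
    have hρt : 0 ≤ ρ - t := le_trans (norm_nonneg _) hxz
    constructor
    · simp only [hBdef, Metric.mem_closedBall, dist_eq_norm]; linarith
    · simp only [hQdef, Set.mem_preimage, hBdef, Metric.mem_closedBall, dist_eq_norm]
      have hxx : ‖x‖ ≤ ‖z‖ + (ρ - t) := by
        calc ‖x‖ = ‖(x - z) + z‖ := by congr 1; module
          _ ≤ ‖x - z‖ + ‖z‖ := norm_add_le _ _
          _ ≤ ‖z‖ + (ρ - t) := by linarith
      calc ‖c • x - z‖ = ‖(c • x - x) + (x - z)‖ := by congr 1; module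
        _ ≤ ‖c • x - x‖ + ‖x - z‖ := norm_add_le _ _
        _ ≤ (c-1)*‖x‖ + (ρ - t) := by
            have : ‖c • x - x‖ = (c-1) * ‖x‖ := by
              rw [show c • x - x = (c-1) • x by module, norm_smul,
                Real.norm_eq_abs, abs_of_nonneg (by linarith)]
            linarith
        _ ≤ ρ := by
            have h1 : (c-1)*‖x‖ ≤ (c-1)*(‖z‖+ρ) := by
              apply mul_le_mul_of_nonneg_left _ (by linarith)
              linarith
            rw [htdef] at *
            linarith
  have hE : Module.finrank ℝ (EuclideanSpace ℝ (Fin d)) = d := finrank_euclideanSpace_fin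
  have hcd1 : 1 ≤ c^d := one_le_pow₀ hc1
  have hcd0 : (0:ℝ) < c^d := lt_of_lt_of_le one_pos hcd1
  set r' := ρ - t with hr'def
  have hr'R : r' ≤ R := by rw [hr'def, hRdef]; linarith
  have hsub : Metric.closedBall z r' ⊆ Metric.closedBall z R :=
    closedBall_subset_closedBall hr'R
  -- rewrite first integral
  set φ₁ : EuclideanSpace ℝ (Fin d) → ℝ :=
    fun x => B.indicator h x * A.indicator (fun _ => (1:ℝ)) x with hφ₁def
  have e1 : (∫ x in B, h x * A.indicator (fun _ => (1:ℝ)) x) = ∫ x, φ₁ x := by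
    rw [← integral_indicator hB]
    congr 1; ext x
    by_cases hx : x ∈ B <;>
      simp [hφ₁def, Set.indicator_of_mem, Set.indicator_of_notMem, hx]
  -- rewrite second integral via change of variables
  set φ₂ : EuclideanSpace ℝ (Fin d) → ℝ :=
    fun x => Q.indicator (fun y => h (c • y)) x * A.indicator (fun _ => (1:ℝ)) x with hφ₂def
  have e2 : (∫ x in B, h x * (c • A).indicator (fun _ => (1:ℝ)) x) = c^d * ∫ x, φ₂ x := by
    rw [← integral_indicator hB]
    have key := MeasureTheory.Measure.integral_comp_smul (volume : Measure (EuclideanSpace ℝ (Fin d)))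
      (fun x => B.indicator (fun y => h y * (c • A).indicator (fun _ => (1:ℝ)) y) x) c
    rw [hE] at key
    have hpt : ∀ x, B.indicator (fun y => h y * (c • A).indicator (fun _ => (1:ℝ)) y) (c • x)
        = φ₂ x := by
      intro x
      have hmem : (c • x ∈ c • A) ↔ x ∈ A := Set.smul_mem_smul_set_iff₀ (ne_of_gt hc0) A x
      have hQm : (x ∈ Q) ↔ c • x ∈ B := Iff.rfl
      by_cases hx : c • x ∈ B
      · rw [Set.indicator_of_mem hx, hφ₂def]
        simp only []
        rw [Set.indicator_of_mem (hQm.2 hx)]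
        by_cases hxA : x ∈ A
        · rw [Set.indicator_of_mem (hmem.2 hxA), Set.indicator_of_mem hxA]
        · rw [Set.indicator_of_notMem (fun hh => hxA (hmem.1 hh)),
            Set.indicator_of_notMem hxA]
      · rw [Set.indicator_of_notMem hx, hφ₂def]
        simp only []
        rw [Set.indicator_of_notMem (fun hh => hx (hQm.1 hh)), zero_mul]
    simp only [hpt] at key
    rw [key, abs_of_pos (inv_pos.2 hcd0), smul_eq_mul]
    field_simp
  -- the dominating function
  set iB : EuclideanSpace ℝ (Fin d) → ℝ := Metric.closedBall z ρ |>.indicator (fun _ => (1:ℝ)) with hiBdef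
  set iR : EuclideanSpace ℝ (Fin d) → ℝ := Metric.closedBall z R |>.indicator (fun _ => (1:ℝ)) with hiRdef
  set ir : EuclideanSpace ℝ (Fin d) → ℝ := Metric.closedBall z r' |>.indicator (fun _ => (1:ℝ)) with hirdef
  set χ : EuclideanSpace ℝ (Fin d) → ℝ :=
    fun x => Mg*t*(iB x) + Mh*(iR x - ir x) + ((c^d-1)*Mh)*(iR x) with hχdef
  -- pointwise bound
  have hpt : ∀ x, |φ₁ x - c^d * φ₂ x| ≤ χ x := by
    intro x
    have hir_le : ∀ y, ir y ≤ iR y := by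
      intro y
      by_cases hy : y ∈ Metric.closedBall z r'
      · rw [hirdef, hiRdef, Set.indicator_of_mem hy, Set.indicator_of_mem (hsub hy)]
      · rw [hirdef, Set.indicator_of_notMem hy]
        exact Set.indicator_nonneg (fun _ _ => zero_le_one) _
    have hiR_nonneg : (0:ℝ) ≤ iR x := Set.indicator_nonneg (fun _ _ => zero_le_one) _
    have hiB_nonneg : (0:ℝ) ≤ iB x := Set.indicator_nonneg (fun _ _ => zero_le_one) _
    have hχ0 : 0 ≤ χ x := by
      rw [hχdef]
      have := hir_le x
      have h1 : 0 ≤ Mg*t*(iB x) := by positivity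
      have h2 : 0 ≤ Mh*(iR x - ir x) := mul_nonneg hMh0 (by linarith)
      have h3 : 0 ≤ ((c^d-1)*Mh)*(iR x) := by
        apply mul_nonneg (mul_nonneg (by linarith) hMh0) hiR_nonneg
      dsimp only
      linarith
    by_cases hxA : x ∈ A
    swap
    · rw [hφ₁def, hφ₂def]
      simp only []
      rw [Set.indicator_of_notMem hxA, mul_zero, mul_zero, mul_zero, sub_zero, abs_zero]
      exact hχ0
    rw [hφ₁def, hφ₂def]
    simp only []
    rw [Set.indicator_of_mem hxA, mul_one, mul_one]
    -- key estimates
    have hestB : ∀ (hxB : x ∈ B), |h x - h (c • x)| ≤ Mg * t := by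
      intro hxB
      have hxn : ‖x‖ ≤ ‖z‖ + ρ := by
        have hxb : ‖x - z‖ ≤ ρ := by
          simpa [hBdef, Metric.mem_closedBall, dist_eq_norm] using hxB
        calc ‖x‖ = ‖(x - z) + z‖ := by congr 1; module
          _ ≤ ‖x - z‖ + ‖z‖ := norm_add_le _ _
          _ ≤ ‖z‖ + ρ := by linarith
      calc |h x - h (c • x)| ≤ Mg * ‖x - c • x‖ := hLip x (c • x)
        _ = Mg * ((c-1) * ‖x‖) := by
            rw [show x - c • x = -((c-1) • x) by module, norm_neg, norm_smul,
              Real.norm_eq_abs, abs_of_nonneg (by linarith : (0:ℝ) ≤ c - 1)]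
        _ ≤ Mg * t := by
            rw [htdef]
            apply mul_le_mul_of_nonneg_left _ hMg0
            exact mul_le_mul_of_nonneg_left hxn (by linarith)
    by_cases hxr : x ∈ Metric.closedBall z r'
    · obtain ⟨hxB, hxQ⟩ := fact3 hxr
      rw [Set.indicator_of_mem hxB, Set.indicator_of_mem hxQ]
      rw [hχdef]
      simp only []
      rw [hiBdef, hiRdef, hirdef, Set.indicator_of_mem hxB,
        Set.indicator_of_mem (fact1 hxB), Set.indicator_of_mem hxr]
      have key : |h x - c^d * h (c • x)| ≤ Mg * t + (c^d - 1) * Mh := by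
        have e : h x - c^d * h (c • x) = (h x - h (c • x)) - (c^d - 1) * h (c • x) := by ring
        rw [e]
        calc |(h x - h (c • x)) - (c^d - 1) * h (c • x)|
            ≤ |h x - h (c • x)| + |(c^d - 1) * h (c • x)| := abs_sub _ _
          _ ≤ Mg * t + (c^d - 1) * Mh := by
              apply add_le_add (hestB hxB)
              rw [abs_mul, abs_of_nonneg (by linarith : (0:ℝ) ≤ c^d - 1)]
              exact mul_le_mul_of_nonneg_left (hMh _) (by linarith)
      calc |h x - c^d * h (c • x)| ≤ Mg * t + (c^d - 1) * Mh := key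
        _ ≤ Mg*t*1 + Mh*(1-1) + ((c^d-1)*Mh)*1 := by linarith
    · rw [hχdef]
      simp only []
      rw [hirdef, Set.indicator_of_notMem hxr]
      by_cases hxB : x ∈ B <;> by_cases hxQ : x ∈ Q
      · rw [Set.indicator_of_mem hxB, Set.indicator_of_mem hxQ,
          hiBdef, hiRdef, Set.indicator_of_mem hxB, Set.indicator_of_mem (fact1 hxB)]
        have key : |h x - c^d * h (c • x)| ≤ Mg * t + (c^d - 1) * Mh := by
          have e : h x - c^d * h (c • x) = (h x - h (c • x)) - (c^d - 1) * h (c • x) := by ring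
          rw [e]
          calc |(h x - h (c • x)) - (c^d - 1) * h (c • x)|
              ≤ |h x - h (c • x)| + |(c^d - 1) * h (c • x)| := abs_sub _ _
            _ ≤ Mg * t + (c^d - 1) * Mh := by
                apply add_le_add (hestB hxB)
                rw [abs_mul, abs_of_nonneg (by linarith : (0:ℝ) ≤ c^d - 1)]
                exact mul_le_mul_of_nonneg_left (hMh _) (by linarith)
        calc |h x - c^d * h (c • x)| ≤ Mg * t + (c^d - 1) * Mh := key
          _ ≤ Mg*t*1 + Mh*(1 - 0) + ((c^d-1)*Mh)*1 := by linarith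
      · rw [Set.indicator_of_mem hxB, Set.indicator_of_notMem hxQ,
          hiBdef, hiRdef, Set.indicator_of_mem hxB, Set.indicator_of_mem (fact1 hxB)]
        rw [mul_zero, sub_zero]
        have := hMh x
        have h1 : 0 ≤ Mg * t := by positivity
        have h2 : 0 ≤ (c^d - 1)*Mh := mul_nonneg (by linarith) hMh0
        linarith
      · rw [Set.indicator_of_notMem hxB, Set.indicator_of_mem hxQ,
          hiBdef, hiRdef, Set.indicator_of_notMem hxB, Set.indicator_of_mem (fact2 hxQ)]
        rw [zero_sub, abs_neg, abs_mul, abs_of_pos hcd0]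
        have := hMh (c • x)
        have h1 : 0 ≤ Mg * t := by positivity
        have h2 : c^d * |h (c • x)| ≤ c^d * Mh :=
          mul_le_mul_of_nonneg_left (hMh _) hcd0.le
        have h3 : Mg*t*0 + Mh*(1 - 0) + ((c^d-1)*Mh)*1 = c^d*Mh := by ring
        rw [h3]
        exact h2
      · rw [Set.indicator_of_notMem hxB, Set.indicator_of_notMem hxQ]
        simp only [mul_zero, sub_zero, abs_zero]
        have h1 : 0 ≤ Mg*t*(iB x) := by
          apply mul_nonneg (by positivity)
          exact Set.indicator_nonneg (fun _ _ => zero_le_one) _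
        have h2 : 0 ≤ Mh*(iR x - 0) := by
          apply mul_nonneg hMh0
          simp only [sub_zero]
          exact Set.indicator_nonneg (fun _ _ => zero_le_one) _
        have h3 : 0 ≤ ((c^d-1)*Mh)*(iR x) := by
          apply mul_nonneg (mul_nonneg (by linarith) hMh0)
          exact Set.indicator_nonneg (fun _ _ => zero_le_one) _
        linarith
  -- integrability
  have hIndInt : ∀ (S : Set (EuclideanSpace ℝ (Fin d))), MeasurableSet S →
      volume S < ⊤ → Integrable (S.indicator (fun _ => (1:ℝ))) := by
    intro S hS hSv
    rw [integrable_indicator_iff hS]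
    exact integrableOn_const hSv.ne
  have hvB : volume B < ⊤ := measure_closedBall_lt_top
  have hvR : volume (Metric.closedBall z R) < ⊤ := measure_closedBall_lt_top
  have hvr : volume (Metric.closedBall z r') < ⊤ := measure_closedBall_lt_top
  have hiBint : Integrable iB := hIndInt _ hB hvB
  have hiRint : Integrable iR := hIndInt _ measurableSet_closedBall hvR
  have hirint : Integrable ir := hIndInt _ measurableSet_closedBall hvr
  have hχint : Integrable χ := by
    apply Integrable.add
    apply Integrable.add
    · exact hiBint.const_mul _
    · exact (hiRint.sub hirint).const_mul _
    · exact hiRint.const_mul _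
  have hφ₁int : Integrable φ₁ := by
    apply Integrable.mono' (hiBint.const_mul Mh)
    · exact ((hcont.measurable.indicator hB).mul
        ((measurable_const (a := (1:ℝ))).indicator hA)).aestronglyMeasurable
    · apply Filter.Eventually.of_forall
      intro x
      rw [Real.norm_eq_abs, hφ₁def]
      simp only []
      by_cases hxB : x ∈ B
      · rw [Set.indicator_of_mem hxB, hiBdef, Set.indicator_of_mem hxB, mul_one, abs_mul]
        by_cases hxA : x ∈ A
        · rw [Set.indicator_of_mem hxA]
          simpa using hMh x
        · rw [Set.indicator_of_notMem hxA]
          simpa using hMh0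
      · rw [Set.indicator_of_notMem hxB, hiBdef, Set.indicator_of_notMem hxB,
          zero_mul, abs_zero, mul_zero]
  have hφ₂int : Integrable φ₂ := by
    apply Integrable.mono' (hiRint.const_mul Mh)
    · exact (((hcont.comp (continuous_const_smul c)).measurable.indicator hQ).mul
        ((measurable_const (a := (1:ℝ))).indicator hA)).aestronglyMeasurable
    · apply Filter.Eventually.of_forall
      intro x
      rw [Real.norm_eq_abs, hφ₂def]
      simp only []
      by_cases hxQ : x ∈ Q
      · rw [Set.indicator_of_mem hxQ, hiRdef, Set.indicator_of_mem (fact2 hxQ), mul_one, abs_mul]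
        by_cases hxA : x ∈ A
        · rw [Set.indicator_of_mem hxA]
          simpa using hMh (c • x)
        · rw [Set.indicator_of_notMem hxA]
          simpa using hMh0
      · rw [Set.indicator_of_notMem hxQ, zero_mul, abs_zero]
        apply mul_nonneg hMh0
        rw [hiRdef]
        exact Set.indicator_nonneg (fun _ _ => zero_le_one) _
  -- the main estimate
  have main : |(∫ x in B, h x * A.indicator (fun _ => (1:ℝ)) x) -
      (∫ x in B, h x * ((c*s) • Γ).indicator (fun _ => (1:ℝ)) x)| ≤ ∫ x, χ x := by
    rw [hcsA, e1, e2]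
    have e3 : c^d * ∫ x, φ₂ x = ∫ x, c^d * φ₂ x := (integral_const_mul _ _).symm
    rw [e3, ← integral_sub hφ₁int (hφ₂int.const_mul _)]
    calc |∫ x, (φ₁ x - c^d * φ₂ x)| ≤ ∫ x, |φ₁ x - c^d * φ₂ x| := by
          have := norm_integral_le_integral_norm (μ := volume)
            (f := fun x => φ₁ x - c^d * φ₂ x)
          simpa [Real.norm_eq_abs] using this
      _ ≤ ∫ x, χ x := by
          apply integral_mono_of_nonneg (Filter.Eventually.of_forall fun x => abs_nonneg _)
            hχint (Filter.Eventually.of_forall hpt)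
  -- compute ∫ χ
  have hiBval : ∫ x, iB x = (volume B).toReal := by
    rw [hiBdef, integral_indicator_const (1:ℝ) hB, smul_eq_mul, mul_one, measureReal_def]
  have hiRval : ∫ x, iR x = (volume (Metric.closedBall z R)).toReal := by
    rw [hiRdef, integral_indicator_const (1:ℝ) measurableSet_closedBall, smul_eq_mul, mul_one, measureReal_def]
  have hirval : ∫ x, ir x = (volume (Metric.closedBall z r')).toReal := by
    rw [hirdef, integral_indicator_const (1:ℝ) measurableSet_closedBall, smul_eq_mul, mul_one, measureReal_def]
  have hχval : ∫ x, χ x = Mg*t*(volume B).toReal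
      + Mh*((volume (Metric.closedBall z R)).toReal - (volume (Metric.closedBall z r')).toReal)
      + ((c^d-1)*Mh)*(volume (Metric.closedBall z R)).toReal := by
    rw [hχdef]
    rw [integral_add (by exact (hiBint.const_mul _).add ((hiRint.sub hirint).const_mul _))
      (by exact hiRint.const_mul _)]
    rw [integral_add (by exact hiBint.const_mul _) (by exact (hiRint.sub hirint).const_mul _)]
    rw [integral_const_mul, integral_const_mul, integral_const_mul,
      integral_sub hiRint hirint, hiBval, hiRval, hirval]
  -- volume formulas
  set ω := (volume (Metric.closedBall (0:EuclideanSpace ℝ (Fin d)) 1)).toReal with hωdef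
  set L := 4*(‖z‖+ρ) with hLdef
  set vB := (volume B).toReal with hvBdef
  have hω0 : 0 ≤ ω := ENNReal.toReal_nonneg
  have hvB0 : 0 ≤ vB := ENNReal.toReal_nonneg
  have hRform : (volume (Metric.closedBall z R)).toReal = R^d * ω := by
    rw [hωdef, MeasureTheory.Measure.addHaar_closedBall' volume z hR0, hE,
      ENNReal.toReal_mul, ENNReal.toReal_ofReal (pow_nonneg hR0 d)]
  have hrform : (volume (Metric.closedBall z r')).toReal = (max r' 0)^d * ω := by
    rcases le_or_gt 0 r' with hr0 | hr0
    · rw [hωdef, MeasureTheory.Measure.addHaar_closedBall' volume z hr0, hE,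
        ENNReal.toReal_mul, ENNReal.toReal_ofReal (pow_nonneg hr0 d), max_eq_left hr0]
    · rw [Metric.closedBall_eq_empty.2 hr0, measure_empty, ENNReal.toReal_zero,
        max_eq_right hr0.le, zero_pow (by omega : d ≠ 0), zero_mul]
  have hm0 : 0 ≤ max r' 0 := le_max_right _ _
  have hmR : max r' 0 ≤ R := max_le hr'R hR0
  have hRm : R - max r' 0 ≤ 2*t := by
    rcases le_or_gt 0 r' with hr0 | hr0
    · rw [max_eq_left hr0, hRdef, hr'def]; linarith
    · rw [max_eq_right hr0.le, hRdef]
      rw [hr'def] at hr0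
      linarith
  have hRL : R ≤ L := by rw [hRdef, hLdef]; have := norm_nonneg z; linarith
  have hL0 : 0 ≤ L := hR0.trans hRL
  have hdiff : R^d - (max r' 0)^d ≤ d * L^(d-1) * (2*t) := by
    calc R^d - (max r' 0)^d ≤ d * R^(d-1) * (R - max r' 0) := pow_sub_pow_le' hm0 hmR d
      _ ≤ d * L^(d-1) * (2*t) := by
          apply mul_le_mul (mul_le_mul_of_nonneg_left (pow_le_pow_left₀ hR0 hRL _)
            (Nat.cast_nonneg d)) hRm (by linarith) (by positivity)
  have hcdb : c^d - 1 ≤ d * 4^(d-1) * (c-1) := by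
    calc c^d - 1 = c^d - 1^d := by rw [one_pow]
      _ ≤ d * c^(d-1) * (c - 1) := pow_sub_pow_le' zero_le_one hc1 d
      _ ≤ d * 4^(d-1) * (c-1) := by
          apply mul_le_mul_of_nonneg_right _ (by linarith)
          exact mul_le_mul_of_nonneg_left
            (pow_le_pow_left₀ (by linarith : (0:ℝ) ≤ c) hc4 _) (Nat.cast_nonneg d)
  have hRd : R^d ≤ L^d := pow_le_pow_left₀ hR0 hRL d
  -- assemble
  have T1 : Mg*t*vB = (c-1)*((‖z‖+ρ)*vB*Mg) := by rw [htdef]; ring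
  have T2 : Mh*((R^d - (max r' 0)^d)*ω) ≤ (c-1)*(2*(d:ℝ)*(‖z‖+ρ)*L^(d-1)*ω*Mh) := by
    calc Mh*((R^d - (max r' 0)^d)*ω) ≤ Mh*((d * L^(d-1) * (2*t))*ω) :=
          mul_le_mul_of_nonneg_left (mul_le_mul_of_nonneg_right hdiff hω0) hMh0
      _ = (c-1)*(2*(d:ℝ)*(‖z‖+ρ)*L^(d-1)*ω*Mh) := by rw [htdef]; ring
  have T3 : ((c^d-1)*Mh)*(R^d*ω) ≤ (c-1)*((d:ℝ)*4^(d-1)*L^d*ω*Mh) := by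
    calc ((c^d-1)*Mh)*(R^d*ω) ≤ (((d:ℝ)*4^(d-1)*(c-1))*Mh)*(L^d*ω) := by
          apply mul_le_mul (mul_le_mul_of_nonneg_right hcdb hMh0)
            (mul_le_mul_of_nonneg_right hRd hω0)
            (mul_nonneg (pow_nonneg hR0 d) hω0)
            (mul_nonneg (mul_nonneg (by positivity) (by linarith : (0:ℝ) ≤ c-1)) hMh0)
      _ = (c-1)*((d:ℝ)*4^(d-1)*L^d*ω*Mh) := by ring
  calc |(∫ x in B, h x * A.indicator (fun _ => (1:ℝ)) x) -
      (∫ x in B, h x * ((c*s) • Γ).indicator (fun _ => (1:ℝ)) x)| ≤ ∫ x, χ x := main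
    _ = Mg*t*vB + Mh*((R^d - (max r' 0)^d)*ω) + ((c^d-1)*Mh)*(R^d*ω) := by
        rw [hχval, hRform, hrform, hvBdef]; ring
    _ ≤ (c - 1) * (((‖z‖+ρ) * vB) * Mg +
        (2*(d:ℝ)*(‖z‖+ρ)*L^(d-1)*ω + (d:ℝ)*4^(d-1)*L^d*ω) * Mh) := by
        have expand : (c - 1) * (((‖z‖+ρ) * vB) * Mg +
            (2*(d:ℝ)*(‖z‖+ρ)*L^(d-1)*ω + (d:ℝ)*4^(d-1)*L^d*ω) * Mh)
            = (c-1)*((‖z‖+ρ)*vB*Mg) + (c-1)*(2*(d:ℝ)*(‖z‖+ρ)*L^(d-1)*ω*Mh)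
              + (c-1)*((d:ℝ)*4^(d-1)*L^d*ω*Mh) := by ring
        rw [expand]
        linarith

set_option maxHeartbeats 1000000 in
lemma core2 (d : ℕ) (z : EuclideanSpace ℝ (Fin d)) (ρ : ℝ) (hρ : 0 < ρ)
    (Γ : Set (EuclideanSpace ℝ (Fin d))) (hΓ : MeasurableSet Γ)
    (h : EuclideanSpace ℝ (Fin d) → ℝ) (Mh Mg : ℝ) (hMh0 : 0 ≤ Mh) (hMg0 : 0 ≤ Mg)
    (hcont : Continuous h) (hMh : ∀ x, |h x| ≤ Mh)
    (hLip : ∀ x y, |h x - h y| ≤ Mg * ‖x - y‖)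
    (k : ℕ) (hk : 1 ≤ k) (ε : ℝ) (hεl : (((k:ℝ)+1)^3)⁻¹ ≤ ε) (hεu : ε ≤ (((k:ℝ))^3)⁻¹) :
    |(∫ x in Metric.closedBall z ρ,
        h x * Set.indicator (Real.sqrt ε • Γ) (fun _ => (1:ℝ)) x) -
      (∫ x in Metric.closedBall z ρ,
        h x * Set.indicator (Real.sqrt (((k:ℝ)^3)⁻¹) • Γ) (fun _ => (1:ℝ)) x)| ≤
    (3/(k:ℝ)) * (((‖z‖+ρ) * (volume (Metric.closedBall z ρ)).toReal) * Mg +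
      (2*(d:ℝ)*(‖z‖+ρ)*(4*(‖z‖+ρ))^(d-1)*(volume (Metric.closedBall (0:EuclideanSpace ℝ (Fin d)) 1)).toReal
        + (d:ℝ)*4^(d-1)*(4*(‖z‖+ρ))^d*(volume (Metric.closedBall (0:EuclideanSpace ℝ (Fin d)) 1)).toReal) * Mh) := by
  have hk1 : (1:ℝ) ≤ (k:ℝ) := by exact_mod_cast hk
  have hk0 : (0:ℝ) < (k:ℝ) := by linarith
  have hkp : (0:ℝ) < (k:ℝ)^3 := by positivity
  have hε0 : 0 < ε := lt_of_lt_of_le (by positivity) hεl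
  have hRHS0 : 0 ≤ (3/(k:ℝ)) * (((‖z‖+ρ) * (volume (Metric.closedBall z ρ)).toReal) * Mg +
      (2*(d:ℝ)*(‖z‖+ρ)*(4*(‖z‖+ρ))^(d-1)*(volume (Metric.closedBall (0:EuclideanSpace ℝ (Fin d)) 1)).toReal
        + (d:ℝ)*4^(d-1)*(4*(‖z‖+ρ))^d*(volume (Metric.closedBall (0:EuclideanSpace ℝ (Fin d)) 1)).toReal) * Mh) := by
    have hzρ : (0:ℝ) ≤ ‖z‖ + ρ := by positivity
    apply mul_nonneg (by positivity)
    apply add_nonneg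
    · exact mul_nonneg (mul_nonneg hzρ ENNReal.toReal_nonneg) hMg0
    · apply mul_nonneg _ hMh0
      apply add_nonneg
      · apply mul_nonneg (mul_nonneg (mul_nonneg (by positivity) hzρ) (by positivity))
          ENNReal.toReal_nonneg
      · apply mul_nonneg (mul_nonneg (by positivity) (by positivity)) ENNReal.toReal_nonneg
  rcases Nat.eq_zero_or_pos d with hd0 | hd
  · subst hd0
    haveI : Subsingleton (EuclideanSpace ℝ (Fin 0)) := ⟨fun a b => by ext i; exact i.elim0⟩
    have hsmul : ∀ (s : ℝ), s • Γ = Γ := by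
      intro s
      ext x
      constructor
      · rintro ⟨y, hy, rfl⟩
        have hyy : s • y = y := Subsingleton.elim _ _
        simpa [hyy] using hy
      · intro hx
        exact ⟨x, hx, Subsingleton.elim _ _⟩
    rw [hsmul, hsmul, sub_self, abs_zero]
    exact hRHS0
  · set s := Real.sqrt ε with hsdef
    have hs : 0 < s := Real.sqrt_pos.2 hε0
    set c := Real.sqrt (((k:ℝ)^3)⁻¹ / ε) with hcdef
    have hq1 : 1 ≤ ((k:ℝ)^3)⁻¹ / ε := by
      rw [le_div_iff₀ hε0, one_mul]
      exact hεu
    have hc1 : 1 ≤ c := by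
      rw [hcdef, ← Real.sqrt_one]
      exact Real.sqrt_le_sqrt hq1
    have hq2 : ((k:ℝ)^3)⁻¹ / ε ≤ (1 + 3/(k:ℝ))^2 := by
      have h1ε : (1:ℝ)/ε ≤ ((k:ℝ)+1)^3 := by
        rw [div_le_iff₀ hε0]
        have := mul_le_mul_of_nonneg_right hεl (le_of_lt (by positivity : (0:ℝ) < ((k:ℝ)+1)^3))
        rw [inv_mul_cancel₀ (by positivity : ((k:ℝ)+1)^3 ≠ 0)] at this
        linarith [this]
      have e : (1+3/(k:ℝ))^2 * (k:ℝ)^3 = ((k:ℝ)+3)^2*(k:ℝ) := by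
        field_simp
      have key : ((k:ℝ)+1)^3 ≤ (1+3/(k:ℝ))^2 * (k:ℝ)^3 := by
        rw [e]
        nlinarith [hk1]
      calc ((k:ℝ)^3)⁻¹/ε = ((k:ℝ)^3)⁻¹ * (1/ε) := by ring
        _ ≤ ((k:ℝ)^3)⁻¹ * ((k:ℝ)+1)^3 := mul_le_mul_of_nonneg_left h1ε (inv_nonneg.2 hkp.le)
        _ ≤ (1+3/(k:ℝ))^2 := by
            rw [inv_mul_le_iff₀ hkp]
            linarith [key]
    have hc' : c ≤ 1 + 3/(k:ℝ) := by
      have h2 : c ≤ Real.sqrt ((1+3/(k:ℝ))^2) := Real.sqrt_le_sqrt hq2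
      rwa [Real.sqrt_sq (by positivity)] at h2
    have hc4 : c ≤ 4 := by
      have h3 : 3/(k:ℝ) ≤ 3 := by
        rw [div_le_iff₀ hk0]
        nlinarith
      linarith
    have hcs : c * s = Real.sqrt (((k:ℝ)^3)⁻¹) := by
      rw [hcdef, hsdef, ← Real.sqrt_mul (by positivity) ε, div_mul_cancel₀ _ (ne_of_gt hε0)]
    have est := core d hd z ρ hρ Γ hΓ h Mh Mg hMh0 hMg0 hcont hMh hLip s c hs hc1 hc4
    rw [hcs] at est
    have hfac : 0 ≤ ((‖z‖+ρ) * (volume (Metric.closedBall z ρ)).toReal) * Mg +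
        (2*(d:ℝ)*(‖z‖+ρ)*(4*(‖z‖+ρ))^(d-1)*(volume (Metric.closedBall (0:EuclideanSpace ℝ (Fin d)) 1)).toReal
          + (d:ℝ)*4^(d-1)*(4*(‖z‖+ρ))^d*(volume (Metric.closedBall (0:EuclideanSpace ℝ (Fin d)) 1)).toReal) * Mh := by
      have h9 := hRHS0
      have h30 : (0:ℝ) < 3/(k:ℝ) := by positivity
      nlinarith [h9, h30]
    have step : (c-1) * (((‖z‖+ρ) * (volume (Metric.closedBall z ρ)).toReal) * Mg +
        (2*(d:ℝ)*(‖z‖+ρ)*(4*(‖z‖+ρ))^(d-1)*(volume (Metric.closedBall (0:EuclideanSpace ℝ (Fin d)) 1)).toReal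
          + (d:ℝ)*4^(d-1)*(4*(‖z‖+ρ))^d*(volume (Metric.closedBall (0:EuclideanSpace ℝ (Fin d)) 1)).toReal) * Mh)
        ≤ (3/(k:ℝ)) * (((‖z‖+ρ) * (volume (Metric.closedBall z ρ)).toReal) * Mg +
        (2*(d:ℝ)*(‖z‖+ρ)*(4*(‖z‖+ρ))^(d-1)*(volume (Metric.closedBall (0:EuclideanSpace ℝ (Fin d)) 1)).toReal
          + (d:ℝ)*4^(d-1)*(4*(‖z‖+ρ))^d*(volume (Metric.closedBall (0:EuclideanSpace ℝ (Fin d)) 1)).toReal) * Mh) :=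
      mul_le_mul_of_nonneg_right (by linarith) hfac
    calc _ ≤ _ := est
      _ ≤ _ := step
end Helpers

/-- Interpolation lemma: for U'_ε = ∫_B h·1_{√ε Γ}, with ε_k = k⁻³,
for all ε ∈ [(k+1)⁻³, k⁻³],
|U'_ε - U'_{ε_k}| ≤ (1-(εk³)^{d/2})‖h‖λ(B) + (C'/k)‖∇h‖ + (C''/k)‖h‖,
with C', C'' depending only on the ball B and d; consequently the sup over this
range of ε tends to 0 as k → ∞. -/
theorem scaling_interpolation (d : ℕ) (z : EuclideanSpace ℝ (Fin d)) (ρ : ℝ) (hρ : 0 < ρ) :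
    ∃ C' C'' : ℝ, 0 < C' ∧ 0 < C'' ∧
    ∀ (Γ : Set (EuclideanSpace ℝ (Fin d))), MeasurableSet Γ →
    ∀ (h : EuclideanSpace ℝ (Fin d) → ℝ) (Mh Mg : ℝ),
      ContDiff ℝ 1 h → (∀ x, |h x| ≤ Mh) → (∀ x, ‖fderiv ℝ h x‖ ≤ Mg) →
      (∀ k : ℕ, 1 ≤ k → ∀ ε ∈ Set.Icc (((k:ℝ)+1)^3)⁻¹ (((k:ℝ))^3)⁻¹,
        |(∫ x in Metric.closedBall z ρ,
            h x * Set.indicator (Real.sqrt ε • Γ) (fun _ => (1:ℝ)) x) -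
          (∫ x in Metric.closedBall z ρ,
            h x * Set.indicator (Real.sqrt (((k:ℝ)^3)⁻¹) • Γ) (fun _ => (1:ℝ)) x)| ≤
          (1 - (ε * (k:ℝ)^3) ^ ((d:ℝ)/2)) * Mh *
              (volume (Metric.closedBall z ρ)).toReal +
            (C' / k) * Mg + (C'' / k) * Mh) ∧
      (∀ η > (0:ℝ), ∀ᶠ k : ℕ in atTop, ∀ ε ∈ Set.Icc (((k:ℝ)+1)^3)⁻¹ (((k:ℝ))^3)⁻¹,
        |(∫ x in Metric.closedBall z ρ,
            h x * Set.indicator (Real.sqrt ε • Γ) (fun _ => (1:ℝ)) x) -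
          (∫ x in Metric.closedBall z ρ,
            h x * Set.indicator (Real.sqrt (((k:ℝ)^3)⁻¹) • Γ) (fun _ => (1:ℝ)) x)| ≤ η) := by
  set K1 := (‖z‖+ρ) * (volume (Metric.closedBall z ρ)).toReal with hK1
  set K2 := 2*(d:ℝ)*(‖z‖+ρ)*(4*(‖z‖+ρ))^(d-1)*(volume (Metric.closedBall (0:EuclideanSpace ℝ (Fin d)) 1)).toReal
      + (d:ℝ)*4^(d-1)*(4*(‖z‖+ρ))^d*(volume (Metric.closedBall (0:EuclideanSpace ℝ (Fin d)) 1)).toReal with hK2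
  have hzρ : (0:ℝ) < ‖z‖ + ρ := by positivity
  have hK10 : 0 ≤ K1 := mul_nonneg hzρ.le ENNReal.toReal_nonneg
  have hK20 : 0 ≤ K2 := by
    rw [hK2]
    apply add_nonneg
    · apply mul_nonneg (mul_nonneg (mul_nonneg (by positivity) hzρ.le) (by positivity))
        ENNReal.toReal_nonneg
    · exact mul_nonneg (mul_nonneg (by positivity) (by positivity)) ENNReal.toReal_nonneg
  refine ⟨3*K1+1, 3*K2+1, by linarith, by linarith, ?_⟩
  intro Γ hΓ h Mh Mg hcd hMh hMg
  have hMh0 : 0 ≤ Mh := (abs_nonneg _).trans (hMh z)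
  have hMg0 : 0 ≤ Mg := (norm_nonneg _).trans (hMg z)
  have hcont : Continuous h := hcd.continuous
  have hLip : ∀ x y, |h x - h y| ≤ Mg * ‖x - y‖ := by
    intro x y
    have hdiff : ∀ u ∈ (Set.univ : Set (EuclideanSpace ℝ (Fin d))),
        DifferentiableAt ℝ h u := fun u _ => (hcd.differentiable one_ne_zero).differentiableAt
    have := Convex.norm_image_sub_le_of_norm_fderiv_le hdiff
      (fun u _ => hMg u) convex_univ (Set.mem_univ y) (Set.mem_univ x)
    simpa [Real.norm_eq_abs] using this
  constructor
  · -- part 1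
    intro k hk ε hε
    obtain ⟨hεl, hεu⟩ := hε
    have hk1 : (1:ℝ) ≤ (k:ℝ) := by exact_mod_cast hk
    have hk0 : (0:ℝ) < (k:ℝ) := by linarith
    have hε0 : 0 < ε := lt_of_lt_of_le (by positivity) hεl
    have base := core2 d z ρ hρ Γ hΓ h Mh Mg hMh0 hMg0 hcont hMh hLip k hk ε hεl hεu
    rw [← hK1, ← hK2] at base
    have hεk1 : ε * (k:ℝ)^3 ≤ 1 := by
      have := mul_le_mul_of_nonneg_right hεu (by positivity : (0:ℝ) ≤ (k:ℝ)^3)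
      rwa [inv_mul_cancel₀ (by positivity : ((k:ℝ))^3 ≠ 0)] at this
    have hterm1 : 0 ≤ (1 - (ε * (k:ℝ)^3) ^ ((d:ℝ)/2)) * Mh *
        (volume (Metric.closedBall z ρ)).toReal := by
      apply mul_nonneg (mul_nonneg _ hMh0) ENNReal.toReal_nonneg
      have hle : (ε * (k:ℝ)^3) ^ ((d:ℝ)/2) ≤ 1 :=
        Real.rpow_le_one (by positivity) hεk1 (by positivity)
      linarith
    have e : (3/(k:ℝ))*(K1*Mg + K2*Mh) = (3*K1/(k:ℝ))*Mg + (3*K2/(k:ℝ))*Mh := by ring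
    have g1 : (3*K1/(k:ℝ))*Mg ≤ ((3*K1+1)/(k:ℝ))*Mg := by
      apply mul_le_mul_of_nonneg_right _ hMg0
      gcongr
      linarith
    have g2 : (3*K2/(k:ℝ))*Mh ≤ ((3*K2+1)/(k:ℝ))*Mh := by
      apply mul_le_mul_of_nonneg_right _ hMh0
      gcongr
      linarith
    linarith [base, hterm1, g1, g2]
  · -- part 2
    intro η hη
    have tends : Filter.Tendsto (fun k : ℕ => (3*(K1*Mg+K2*Mh))/(k:ℝ)) atTop (𝓝 0) :=
      tendsto_const_div_atTop_nhds_zero_nat _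
    have h1 : ∀ᶠ k : ℕ in atTop, (3*(K1*Mg+K2*Mh))/(k:ℝ) < η :=
      tends.eventually (gt_mem_nhds hη)
    filter_upwards [h1, Filter.eventually_ge_atTop 1] with k hk1 hk2
    intro ε hε
    obtain ⟨hεl, hεu⟩ := hε
    have base := core2 d z ρ hρ Γ hΓ h Mh Mg hMh0 hMg0 hcont hMh hLip k hk2 ε hεl hεu
    rw [← hK1, ← hK2] at base
    calc _ ≤ (3/(k:ℝ))*(K1*Mg + K2*Mh) := base
      _ = (3*(K1*Mg+K2*Mh))/(k:ℝ) := by ring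
      _ ≤ η := le_of_lt hk1
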